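/- (Proposition 1) Let X be a finite set of pixel locations, let C = Fin 3 index the three color channels, and let Ω : X → Finset X assign to every pixel x a nonempty local patch Ω(x). Let O, B, R, B̄, R̄ : C → X → ℝ be multichannel images satisfying, for every channel c ∈ C and pixel y ∈ X: (i) the decompositions O_c(y) = B_c(y) + R_c(y) and O_c(y) = B̄_c(y) + R̄_c(y); (ii) R_c(y) ≤ R̄_c(y); and (iii) B_c(y) ≤ 1. Define the bright-channel images J(x) = max_{y ∈ Ω(x)} max_{c ∈ C} B_c(y) and J̄(x) = max_{y ∈ Ω(x)} max_{c ∈ C} B̄_c(y). Then ‖1 − J‖₀ ≤ ‖1 − J̄‖₀, i.e. the number of pixels x with J(x) ≠ 1 is at most the number of pixels x with J̄(x) ≠ 1; equivalently, the image derained channel-wisely has at least as many brightest pixels as the image derained without distinguishing color channels. -/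
import Mathlib


/-- **Proposition 1.** Let `O = B + R = B̄ + R̄` channel-wise, with
`R_c ≤ R̄_c` pointwise and `B_c ≤ 1` pointwise, on a finite pixel set `X` with
channels `Fin 3` and nonempty patches `Ω(x)`.  With bright channels
`J(x) = max_{y ∈ Ω(x)} max_c B_c(y)` and `J̄(x) = max_{y ∈ Ω(x)} max_c B̄_c(y)`,
we have `‖1 − J‖₀ ≤ ‖1 − J̄‖₀`: the channel-wisely derained image has at least
as many brightest pixels as the channel-agnostically derained one. -/
theorem channelwise_deraining_brightest_pixels {X : Type*} [Fintype X]
    (Ω : X → Finset X) (hΩ : ∀ x : X, (Ω x).Nonempty)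
    (O B R Bbar Rbar : Fin 3 → X → ℝ)
    (hBR : ∀ (c : Fin 3) (y : X), O c y = B c y + R c y)
    (hBbarRbar : ∀ (c : Fin 3) (y : X), O c y = Bbar c y + Rbar c y)
    (hR : ∀ (c : Fin 3) (y : X), R c y ≤ Rbar c y)
    (hB1 : ∀ (c : Fin 3) (y : X), B c y ≤ 1) :
    Set.ncard {x : X |
        1 - (Ω x).sup' (hΩ x)
          (fun y => Finset.univ.sup' Finset.univ_nonempty fun c : Fin 3 => B c y) ≠ 0}
      ≤ Set.ncard {x : X |
        1 - (Ω x).sup' (hΩ x)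
          (fun y => Finset.univ.sup' Finset.univ_nonempty fun c : Fin 3 => Bbar c y) ≠ 0} := by
  have hBbarB : ∀ (c : Fin 3) (y : X), Bbar c y ≤ B c y := by
    intro c y
    have h1 := hBR c y
    have h2 := hBbarRbar c y
    have h3 := hR c y
    linarith
  apply Set.ncard_le_ncard _ (Set.toFinite _)
  intro x hx
  simp only [Set.mem_setOf_eq] at hx ⊢
  intro hbar
  apply hx
  have hJbar_le_J :
      (Ω x).sup' (hΩ x)
          (fun y => Finset.univ.sup' Finset.univ_nonempty fun c : Fin 3 => Bbar c y)
        ≤ (Ω x).sup' (hΩ x)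
          (fun y => Finset.univ.sup' Finset.univ_nonempty fun c : Fin 3 => B c y) := by
    apply Finset.sup'_mono_fun
    intro y _
    exact Finset.sup'_mono_fun fun c _ => hBbarB c y
  have hJ_le_one :
      (Ω x).sup' (hΩ x)
          (fun y => Finset.univ.sup' Finset.univ_nonempty fun c : Fin 3 => B c y) ≤ 1 := by
    apply Finset.sup'_le
    intro y _
    exact Finset.sup'_le _ _ fun c _ => hB1 c y
  have : (1:ℝ) ≤ (Ω x).sup' (hΩ x)
      (fun y => Finset.univ.sup' Finset.univ_nonempty fun c : Fin 3 => Bbar c y) := by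
    linarith [sub_eq_zero.mp hbar]
  linarith
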